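/- (Corrected Lemma 6, scalar form.) Let 0 < p < 1, let λ ∈ ℂ \ (−∞,0], let m ∈ ℕ, and let t, τ > 0. Then (t − τ) ∑_{i=0}^{m} Ψ_i(t,λ) Ψ̃_{m−i}(−τ,λ) = (−τ/p) Ψ̃_m(t−τ, λ). -/

import Mathlib

noncomputable def psi (p : ℝ) (m : ℕ) (t : ℝ) (lam : ℂ) : ℂ :=
  (1 / (m.factorial : ℂ)) *
    iteratedDeriv m (fun z : ℂ => (1 / (p : ℂ)) * Complex.exp ((t : ℂ) * z ^ (1 / (p : ℂ)))) lam

noncomputable def psiT (p : ℝ) (m : ℕ) (t : ℝ) (lam : ℂ) : ℂ :=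
  (1 / (m.factorial : ℂ)) *
    iteratedDeriv (m + 1) (fun z : ℂ => Complex.exp ((t : ℂ) * z ^ (1 / (p : ℂ)))) lam

open Complex Set Finset Topology

/-- The basic exponential function `z ↦ exp(s z^{1/p})`. -/
noncomputable def Fe (p s : ℝ) : ℂ → ℂ := fun z => Complex.exp ((s : ℂ) * z ^ (1 / (p : ℂ)))

lemma iterWithin_eq {s : Set ℂ} (hs : IsOpen s) {x : ℂ} (hx : x ∈ s) (f : ℂ → ℂ) (n : ℕ) :
    iteratedDerivWithin n f s x = iteratedDeriv n f x := by
  rw [iteratedDerivWithin_eq_iteratedFDerivWithin, iteratedDeriv_eq_iteratedFDeriv,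
    iteratedFDerivWithin_of_isOpen n hs hx]

lemma iter_shift {s : Set ℂ} (hs : IsOpen s) {x : ℂ} (hx : x ∈ s) (f : ℂ → ℂ) (n : ℕ) :
    iteratedDerivWithin n (deriv f) s x = iteratedDerivWithin (n + 1) f s x := by
  rw [iteratedDerivWithin_succ']
  exact (iteratedDerivWithin_congr
    (fun y hy => derivWithin_of_isOpen hs hy) hx).symm

lemma pascal_sum (A B : ℕ → ℂ) (n : ℕ) :
    ∑ i ∈ Finset.range (n+2), (((n+1).choose i : ℕ) : ℂ) * (A i * B (n+1-i))
    = ∑ i ∈ Finset.range (n+1), ((n.choose i : ℕ) : ℂ) * (A (i+1) * B (n-i))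
    + ∑ i ∈ Finset.range (n+1), ((n.choose i : ℕ) : ℂ) * (A i * B (n-i+1)) := by
  rw [Finset.sum_range_succ' (fun i => (((n+1).choose i : ℕ) : ℂ) * (A i * B (n+1-i))) (n+1)]
  have h1 : ∑ i ∈ Finset.range (n+1), (((n+1).choose (i+1) : ℕ) : ℂ) * (A (i+1) * B (n+1-(i+1)))
      = ∑ i ∈ Finset.range (n+1), (((n.choose i : ℕ) : ℂ) * (A (i+1) * B (n-i))
        + ((n.choose (i+1) : ℕ) : ℂ) * (A (i+1) * B (n-i))) := by
    refine Finset.sum_congr rfl fun i hi => ?_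
    rw [Nat.choose_succ_succ, Nat.succ_sub_succ]
    push_cast; ring
  rw [h1, Finset.sum_add_distrib]
  have h2 : ∑ i ∈ Finset.range (n+1), ((n.choose (i+1) : ℕ) : ℂ) * (A (i+1) * B (n-i))
      + (((n+1).choose 0 : ℕ) : ℂ) * (A 0 * B (n+1-0))
      = ∑ i ∈ Finset.range (n+1), ((n.choose i : ℕ) : ℂ) * (A i * B (n-i+1)) := by
    rw [Finset.sum_range_succ, Nat.choose_succ_self, Nat.cast_zero, zero_mul, add_zero,
      Finset.sum_range_succ' (fun i => ((n.choose i : ℕ) : ℂ) * (A i * B (n-i+1))) n]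
    congr 1
    · refine Finset.sum_congr rfl fun i hi => ?_
      have hi' : i < n := Finset.mem_range.mp hi
      have : n - (i+1) + 1 = n - i := by omega
      rw [this]
    · simp
  linear_combination h2

lemma leibniz_open {s : Set ℂ} (hs : IsOpen s) (n : ℕ) :
    ∀ (f g : ℂ → ℂ), AnalyticOnNhd ℂ f s → AnalyticOnNhd ℂ g s → ∀ x ∈ s,
    iteratedDerivWithin n (fun z => f z * g z) s x
      = ∑ i ∈ Finset.range (n+1), ((n.choose i : ℕ) : ℂ) *
          (iteratedDerivWithin i f s x * iteratedDerivWithin (n-i) g s x) := by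
  have hu : UniqueDiffOn ℂ s := hs.uniqueDiffOn
  induction n with
  | zero => intro f g hf hg x hx; simp
  | succ n IH =>
    intro f g hf hg x hx
    rw [iteratedDerivWithin_succ']
    have hEq : Set.EqOn (derivWithin (fun z => f z * g z) s)
        (fun z => deriv f z * g z + f z * deriv g z) s := by
      intro y hy
      rw [derivWithin_of_isOpen hs hy]
      exact deriv_mul (hf y hy).differentiableAt (hg y hy).differentiableAt
    rw [iteratedDerivWithin_congr hEq hx]
    have hsplit : (fun z => deriv f z * g z + f z * deriv g z)
        = (fun z => deriv f z * g z) + (fun z => f z * deriv g z) := rfl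
    rw [hsplit, iteratedDerivWithin_add hx hu
      ((((hf.deriv).mul hg).contDiffOn hu).contDiffWithinAt hx) (((hf.mul (hg.deriv)).contDiffOn hu).contDiffWithinAt hx),
      IH (deriv f) g hf.deriv hg x hx, IH f (deriv g) hf hg.deriv x hx]
    have e1 : ∀ i ∈ Finset.range (n+1),
        ((n.choose i : ℕ) : ℂ) * (iteratedDerivWithin i (deriv f) s x *
          iteratedDerivWithin (n-i) g s x)
        = ((n.choose i : ℕ) : ℂ) * (iteratedDerivWithin (i+1) f s x *
          iteratedDerivWithin (n-i) g s x) := by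
      intro i _; rw [iter_shift hs hx]
    have e2 : ∀ i ∈ Finset.range (n+1),
        ((n.choose i : ℕ) : ℂ) * (iteratedDerivWithin i f s x *
          iteratedDerivWithin (n-i) (deriv g) s x)
        = ((n.choose i : ℕ) : ℂ) * (iteratedDerivWithin i f s x *
          iteratedDerivWithin (n-i+1) g s x) := by
      intro i _; rw [iter_shift hs hx]
    rw [Finset.sum_congr rfl e1, Finset.sum_congr rfl e2]
    exact (pascal_sum (fun i => iteratedDerivWithin i f s x)
      (fun j => iteratedDerivWithin j g s x) n).symm

lemma Fe_analytic (p s : ℝ) : AnalyticOnNhd ℂ (Fe p s) Complex.slitPlane :=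
  (analyticOnNhd_const.mul
    ((analyticOnNhd_id.cpow analyticOnNhd_const) (fun _ hz => hz))).cexp

lemma Fe_hasDerivAt (p s : ℝ) {z : ℂ} (hz : z ∈ Complex.slitPlane) :
    HasDerivAt (Fe p s)
      ((s : ℂ) * ((1 / (p : ℂ)) * z ^ ((1 / (p : ℂ)) - 1)) * Fe p s z) z := by
  have h1 : HasDerivAt (fun w : ℂ => w ^ (1 / (p : ℂ)))
      ((1 / (p : ℂ)) * z ^ ((1 / (p : ℂ)) - 1) * 1) z :=
    (hasDerivAt_id z).cpow_const hz
  have h3 := (h1.const_mul (s : ℂ)).cexp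
  convert h3 using 1
  exacts [rfl, rfl, by simp [Fe]; ring]

theorem stmt_5 (p : ℝ) (hp0 : 0 < p) (hp1 : p < 1) (lam : ℂ)
    (hslit : 0 < lam.re ∨ lam.im ≠ 0) (m : ℕ)
    (t τ : ℝ) (ht : 0 < t) (hτ : 0 < τ) :
    ((t - τ : ℝ) : ℂ) * ∑ i ∈ Finset.range (m + 1), psi p i t lam * psiT p (m - i) (-τ) lam
      = (-(τ : ℂ) / (p : ℂ)) * psiT p m (t - τ) lam := by
  have hS : IsOpen Complex.slitPlane := Complex.isOpen_slitPlane
  have hu : UniqueDiffOn ℂ Complex.slitPlane := hS.uniqueDiffOn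
  have hlam : lam ∈ Complex.slitPlane := hslit
  have hτ0 : (τ : ℂ) ≠ 0 := Complex.ofReal_ne_zero.mpr (ne_of_gt hτ)
  have hp0' : (p : ℂ) ≠ 0 := Complex.ofReal_ne_zero.mpr (ne_of_gt hp0)
  set S := Complex.slitPlane
  set K : ℂ := (((t : ℂ) - (τ : ℂ)) / (-(τ : ℂ))) with hK
  -- derivative formula
  have hderiv : ∀ (s : ℝ) (z : ℂ), z ∈ S → deriv (Fe p s) z
      = (s : ℂ) * ((1 / (p : ℂ)) * z ^ ((1 / (p : ℂ)) - 1)) * Fe p s z :=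
    fun s z hz => (Fe_hasDerivAt p s hz).deriv
  -- key functional identity on S
  have hKey : Set.EqOn (derivWithin (Fe p (t - τ)) S)
      (fun z => K * (Fe p t z * deriv (Fe p (-τ)) z)) S := by
    intro z hz
    show derivWithin (Fe p (t - τ)) S z = K * (Fe p t z * deriv (Fe p (-τ)) z)
    rw [derivWithin_of_isOpen hS hz, hderiv (t - τ) z hz, hderiv (-τ) z hz]
    have hprod : Fe p t z * Fe p (-τ) z = Fe p (t - τ) z := by
      simp only [Fe, ← Complex.exp_add]
      push_cast
      ring_nf
    rw [← hprod, hK]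
    push_cast
    field_simp
  -- conversions of psi and psiT
  have hpsiT : ∀ (k : ℕ) (s : ℝ), psiT p k s lam
      = (1 / (k.factorial : ℂ)) * iteratedDerivWithin (k + 1) (Fe p s) S lam := by
    intro k s
    rw [psiT, ← iterWithin_eq hS hlam]
    rfl
  have hpsi : ∀ (i : ℕ), psi p i t lam
      = (1 / (i.factorial : ℂ)) * ((1 / (p : ℂ)) * iteratedDerivWithin i (Fe p t) S lam) := by
    intro i
    rw [psi, ← iterWithin_eq hS hlam (fun z : ℂ =>
      (1 / (p : ℂ)) * Complex.exp ((t : ℂ) * z ^ (1 / (p : ℂ)))) i]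
    have : iteratedDerivWithin i (fun z : ℂ => (1 / (p : ℂ)) * Fe p t z) S lam
        = (1 / (p : ℂ)) * iteratedDerivWithin i (Fe p t) S lam :=
      iteratedDerivWithin_const_mul hlam hu _ (((Fe_analytic p t).contDiffOn hu).contDiffWithinAt hlam)
    rw [show (fun z : ℂ => (1 / (p : ℂ)) * Complex.exp ((t : ℂ) * z ^ (1 / (p : ℂ))))
      = (fun z : ℂ => (1 / (p : ℂ)) * Fe p t z) from rfl, this]
  -- expand RHS
  have hg : AnalyticOnNhd ℂ (deriv (Fe p (-τ))) S := (Fe_analytic p (-τ)).deriv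
  have hRHS : iteratedDerivWithin (m + 1) (Fe p (t - τ)) S lam
      = K * ∑ i ∈ Finset.range (m + 1), ((m.choose i : ℕ) : ℂ) *
          (iteratedDerivWithin i (Fe p t) S lam *
            iteratedDerivWithin (m - i + 1) (Fe p (-τ)) S lam) := by
    rw [iteratedDerivWithin_succ', iteratedDerivWithin_congr hKey hlam,
      iteratedDerivWithin_const_mul hlam hu K
        ((((Fe_analytic p t).mul hg).contDiffOn hu).contDiffWithinAt hlam),
      leibniz_open hS m (Fe p t) (deriv (Fe p (-τ))) (Fe_analytic p t) hg lam hlam]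
    congr 1
    refine Finset.sum_congr rfl fun i _ => ?_
    rw [iter_shift hS hlam]
  -- put everything together
  rw [hpsiT m (t - τ), hRHS]
  have hsum : ∀ i ∈ Finset.range (m + 1), psi p i t lam * psiT p (m - i) (-τ) lam
      = (1 / (i.factorial : ℂ)) * ((1 / (p : ℂ)) * iteratedDerivWithin i (Fe p t) S lam)
        * ((1 / ((m - i).factorial : ℂ)) *
            iteratedDerivWithin (m - i + 1) (Fe p (-τ)) S lam) := by
    intro i _
    rw [hpsi i, hpsiT (m - i) (-τ)]
  rw [Finset.sum_congr rfl hsum]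
  simp only [Finset.mul_sum]
  refine Finset.sum_congr rfl fun i hi => ?_
  have him : i ≤ m := Nat.lt_succ_iff.mp (Finset.mem_range.mp hi)
  have hfac : ((m.choose i : ℕ) : ℂ) * (i.factorial : ℂ) * ((m - i).factorial : ℂ)
      = (m.factorial : ℂ) := by
    have := Nat.choose_mul_factorial_mul_factorial him
    exact_mod_cast congrArg (Nat.cast : ℕ → ℂ) this
  have hfi : (i.factorial : ℂ) ≠ 0 := Nat.cast_ne_zero.mpr i.factorial_ne_zero
  have hfmi : (((m - i).factorial : ℕ) : ℂ) ≠ 0 := Nat.cast_ne_zero.mpr (m - i).factorial_ne_zero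
  have hfm : ((m.factorial : ℕ) : ℂ) ≠ 0 := Nat.cast_ne_zero.mpr m.factorial_ne_zero
  rw [hK]
  push_cast
  field_simp
  linear_combination (-(((t : ℂ) - τ)) * iteratedDerivWithin i (Fe p t) S lam *
    iteratedDerivWithin (m - i + 1) (Fe p (-τ)) S lam) * hfac
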